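/- Let r, b, c, c' ∈ {0,1}^d be vectors with O(c) ⊆ O(c'). Suppose δ(r,c) ≤ δ(b,c) and δ(b,c') < δ(r,c'). Then O(c') contains at least one coordinate from the set B = O(b) \ (O(r) ∪ O(c)); i.e., O(c') ∩ (O(b) \ (O(r) ∪ O(c))) ≠ ∅. -/
import Mathlib


/-- Branching lemma: if a red vector `r` is at least as close to the center `c` as a blue
vector `b`, then any extension `c'` of `c` (i.e. `O(c) ⊆ O(c')`) placing `b` strictly
closer than `r` must be `1` at some coordinate where `b` is `1` but both `r` and `c`
are `0`. -/
theorem branching_lemma (d : ℕ) (r b c c' : Fin d → Bool)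
    (hext : ∀ i, c i = true → c' i = true)
    (h1 : hammingDist r c ≤ hammingDist b c)
    (h2 : hammingDist b c' < hammingDist r c') :
    ∃ i, c' i = true ∧ b i = true ∧ r i = false ∧ c i = false := by
  by_contra h
  push_neg at h
  have key : ∀ i, (if r i ≠ c' i then 1 else 0) + (if b i ≠ c i then 1 else 0) ≤
      (if b i ≠ c' i then 1 else 0) + (if r i ≠ c i then 1 else 0) := by
    intro i
    have h' := h i
    have he := hext i
    cases hb : b i <;> cases hr : r i <;> cases hc : c i <;> cases hc' : c' i <;>
      simp_all
  have hsum : hammingDist r c' + hammingDist b c ≤ hammingDist b c' + hammingDist r c := by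
    simp only [hammingDist, Finset.card_filter]
    rw [← Finset.sum_add_distrib, ← Finset.sum_add_distrib]
    exact Finset.sum_le_sum fun i _ => key i
  omega
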